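/- For every alternating (p+1)-form ω ∈ ⋀^{p+1} T*, the graph graph(ω) := {(X, −ι_X ω) : X ∈ T} is a Lagrangian subspace of E^p; in particular it is isotropic. -/
import Mathlib


open Module

/-- `E^p` for `p = q+1`: the vector space `T ⊕ ⋀^{q+1} T*`. -/
abbrev EP (T : Type) [AddCommGroup T] [Module ℝ T] (q : ℕ) :=
  T × (T [⋀^Fin (q+1)]→ₗ[ℝ] ℝ)

variable {T : Type} [AddCommGroup T] [Module ℝ T]

/-- The `⋀^q T*`-valued pairing on `E^{q+1}`: `⟨(X,α),(Y,β)⟩ = ι_X β + ι_Y α`. -/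
noncomputable def pairing {q : ℕ} (e₁ e₂ : EP T q) : T [⋀^Fin q]→ₗ[ℝ] ℝ :=
  e₂.2.curryLeft e₁.1 + e₁.2.curryLeft e₂.1

def orthSet {q : ℕ} (L : Set (EP T q)) : Set (EP T q) :=
  {e | ∀ l ∈ L, pairing e l = 0}

def IsIsotropic {q : ℕ} (L : Set (EP T q)) : Prop :=
  ∀ e₁ ∈ L, ∀ e₂ ∈ L, pairing e₁ e₂ = 0

lemma curry_antisymm {q : ℕ} (ω : T [⋀^Fin (q+2)]→ₗ[ℝ] ℝ) (X Y : T) :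
    (ω.curryLeft X).curryLeft Y = -((ω.curryLeft Y).curryLeft X) := by
  ext v
  have h : (Fin.cons X (Fin.cons Y v) : Fin (q+2) → T)
      = (Fin.cons Y (Fin.cons X v) : Fin (q+2) → T) ∘ Equiv.swap 0 1 := by
    funext i
    rcases i with ⟨i, hi⟩
    match i with
    | 0 => simp [Equiv.swap_apply_of_ne_of_ne]
    | 1 => simp [Equiv.swap_apply_of_ne_of_ne]
    | (n+2) =>
      have h0 : (⟨n+2, hi⟩ : Fin (q+2)) ≠ 0 := by simp [Fin.ext_iff]
      have h1 : (⟨n+2, hi⟩ : Fin (q+2)) ≠ 1 := by simp [Fin.ext_iff]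
      simp [Equiv.swap_apply_of_ne_of_ne h0 h1]
      rfl
  show ω (Fin.cons X (Fin.cons Y v)) = -ω (Fin.cons Y (Fin.cons X v))
  rw [h, ω.map_swap _ (Fin.zero_ne_one : (0 : Fin (q+2)) ≠ 1)]

lemma isotropic_graph {q : ℕ} (ω : T [⋀^Fin (q+2)]→ₗ[ℝ] ℝ) :
    IsIsotropic {e : EP T q | ∃ X : T, e = (X, -(ω.curryLeft X))} := by
  rintro e₁ ⟨X, rfl⟩ e₂ ⟨Y, rfl⟩
  show (-(ω.curryLeft Y)).curryLeft X + (-(ω.curryLeft X)).curryLeft Y = 0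
  ext v
  have := congrArg (fun f => f v) (curry_antisymm ω X Y)
  simp only [AlternatingMap.neg_apply] at this ⊢
  show -((ω.curryLeft Y) (Fin.cons X v)) + -((ω.curryLeft X) (Fin.cons Y v)) = 0
  have h2 : (ω.curryLeft X) (Fin.cons Y v) = -((ω.curryLeft Y) (Fin.cons X v)) := this
  rw [h2]; ring

theorem stmt7 [FiniteDimensional ℝ T] (q : ℕ) (hq : q + 1 ≤ finrank ℝ T)
    (ω : T [⋀^Fin (q+2)]→ₗ[ℝ] ℝ) :
    ({e : EP T q | ∃ X : T, e = (X, -(ω.curryLeft X))} =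
      orthSet {e : EP T q | ∃ X : T, e = (X, -(ω.curryLeft X))}) ∧
    IsIsotropic {e : EP T q | ∃ X : T, e = (X, -(ω.curryLeft X))} := by
  have hiso := isotropic_graph (T := T) ω
  refine ⟨?_, hiso⟩
  apply Set.Subset.antisymm
  · intro e he l hl
    exact hiso e he l hl
  · rintro ⟨Y, β⟩ he
    refine ⟨Y, ?_⟩
    have hkey : ∀ X : T, β.curryLeft X = (-(ω.curryLeft Y)).curryLeft X := by
      intro X
      have h := he (X, -(ω.curryLeft X)) ⟨X, rfl⟩
      have h' : (-(ω.curryLeft X)).curryLeft Y + β.curryLeft X = 0 := h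
      ext v
      have := congrArg (fun f => f v) h'
      simp only [AlternatingMap.add_apply, AlternatingMap.curryLeft_apply_apply,
        AlternatingMap.neg_apply, AlternatingMap.zero_apply] at this ⊢
      have hc := congrArg (fun f => f v) (curry_antisymm ω X Y)
      simp only [AlternatingMap.curryLeft_apply_apply, AlternatingMap.neg_apply] at hc
      have h3 : -ω (Fin.cons X (Fin.cons Y v)) + β (Fin.cons X v) = 0 := this
      have h4 : ω (Fin.cons X (Fin.cons Y v)) = -ω (Fin.cons Y (Fin.cons X v)) := hc
      show β (Fin.cons X v) = -ω (Fin.cons Y (Fin.cons X v))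
      linarith
    have : β = -(ω.curryLeft Y) := by
      ext w
      have := congrArg (fun f => f (Fin.tail w)) (hkey (w 0))
      simp only [AlternatingMap.curryLeft_apply_apply, AlternatingMap.neg_apply] at this
      show β w = -ω (Fin.cons Y w)
      rw [← Fin.cons_self_tail w]
      exact this
    rw [this]
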